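/- Let {P_m}_{m=0}^{M-1} be mutually orthogonal projections on a finite-dimensional Hilbert space summing to the identity, and let ρ be a density operator. Define C(ρ) = 1 - Σ_m Tr[(P_m √ρ P_m)^2]. Then C(ρ) ≥ 0, and C(ρ) = 0 if and only if ρ = Σ_m P_m ρ P_m. -/

import Mathlib

open scoped ComplexOrder

open Classical in
/-- The positive semidefinite square root of a matrix (zero if not psd). -/
noncomputable def msqrt {d : ℕ} (ρ : Matrix (Fin d) (Fin d) ℂ) : Matrix (Fin d) (Fin d) ℂ :=
  if h : ρ.PosSemidef then
    h.1.eigenvectorUnitary.1 * Matrix.diagonal ((↑) ∘ (√·) ∘ h.1.eigenvalues) *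
      (star h.1.eigenvectorUnitary : Matrix (Fin d) (Fin d) ℂ)
  else 0

/-- The psd square root, in the explicit spectral form used by `msqrt`. -/
noncomputable def Matrix.PosSemidef.sqrt {d : ℕ} {ρ : Matrix (Fin d) (Fin d) ℂ}
    (h : ρ.PosSemidef) : Matrix (Fin d) (Fin d) ℂ :=
  h.1.eigenvectorUnitary.1 * Matrix.diagonal ((↑) ∘ (√·) ∘ h.1.eigenvalues) *
    (star h.1.eigenvectorUnitary : Matrix (Fin d) (Fin d) ℂ)

section SqrtPort
open scoped MatrixOrder

lemma Matrix.PosSemidef.sqrt_eq_cfc {d : ℕ} {ρ : Matrix (Fin d) (Fin d) ℂ}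
    (h : ρ.PosSemidef) : h.sqrt = CFC.sqrt ρ := by
  rw [CFC.sqrt_eq_cfc, cfc_nnreal_eq_real _ ρ h.nonneg, h.1.cfc_eq]
  simp only [Matrix.IsHermitian.cfc, Unitary.conjStarAlgAut_apply, Matrix.PosSemidef.sqrt]
  congr 3
  funext i
  simp [Real.coe_sqrt, Real.coe_toNNReal', max_eq_left (h.eigenvalues_nonneg i)]

lemma Matrix.PosSemidef.posSemidef_sqrt {d : ℕ} {ρ : Matrix (Fin d) (Fin d) ℂ}
    (h : ρ.PosSemidef) : h.sqrt.PosSemidef := by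
  rw [h.sqrt_eq_cfc]; exact Matrix.nonneg_iff_posSemidef.mp (CFC.sqrt_nonneg ρ)

lemma Matrix.PosSemidef.sqrt_mul_self {d : ℕ} {ρ : Matrix (Fin d) (Fin d) ℂ}
    (h : ρ.PosSemidef) : h.sqrt * h.sqrt = ρ := by
  rw [h.sqrt_eq_cfc]; exact CFC.sqrt_mul_sqrt_self ρ h.nonneg

lemma Matrix.PosSemidef.eq_sqrt_of_sq_eq {d : ℕ} {Q ρ : Matrix (Fin d) (Fin d) ℂ}
    (hQ : Q.PosSemidef) (h : ρ.PosSemidef) (hsq : Q ^ 2 = ρ) : Q = h.sqrt := by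
  rw [h.sqrt_eq_cfc, sq] at *
  exact (CFC.sqrt_unique hsq hQ.nonneg).symm

end SqrtPort

open Matrix

lemma trace_ct {d : ℕ} (N : Matrix (Fin d) (Fin d) ℂ) :
    (Nᴴ * N).trace = ((∑ i, ∑ j, Complex.normSq (N j i) : ℝ) : ℂ) := by
  simp only [Matrix.trace, Matrix.diag, Matrix.mul_apply, Matrix.conjTranspose_apply]
  push_cast
  refine Finset.sum_congr rfl fun i _ => Finset.sum_congr rfl fun j _ => ?_
  rw [Complex.normSq_eq_conj_mul_self]
  rfl

lemma eq_zero_of_trace_ct {d : ℕ} (N : Matrix (Fin d) (Fin d) ℂ)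
    (h : (Nᴴ * N).trace = 0) : N = 0 := by
  rw [trace_ct] at h
  have h' : (∑ i, ∑ j, Complex.normSq (N j i) : ℝ) = 0 := by exact_mod_cast h
  ext i j
  have hnn : ∀ i ∈ Finset.univ, (0:ℝ) ≤ ∑ j, Complex.normSq (N j i) :=
    fun i _ => Finset.sum_nonneg fun j _ => Complex.normSq_nonneg _
  have h1 := (Finset.sum_eq_zero_iff_of_nonneg hnn).mp h' j (Finset.mem_univ _)
  have h2 := (Finset.sum_eq_zero_iff_of_nonneg
    (fun k _ => Complex.normSq_nonneg (N k j))).mp h1 i (Finset.mem_univ _)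
  simpa using Complex.normSq_eq_zero.mp h2

/-- Faithfulness of the generalized 1/2-affinity of coherence:
`C(ρ) = 1 - Σ_m Tr[(P_m √ρ P_m)²] ≥ 0`, with equality iff `ρ = Σ_m P_m ρ P_m`. -/
theorem affinity_coherence_faithful {d M : ℕ}
    (P : Fin M → Matrix (Fin d) (Fin d) ℂ)
    (hPh : ∀ m, (P m).IsHermitian) (hPi : ∀ m, P m * P m = P m)
    (hPo : ∀ m m', m ≠ m' → P m * P m' = 0) (hPs : ∑ m, P m = 1)
    (ρ : Matrix (Fin d) (Fin d) ℂ) (hρ : ρ.PosSemidef) (hρtr : ρ.trace = 1) :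
    0 ≤ 1 - ∑ m, ((P m * msqrt ρ * P m) ^ 2).trace.re ∧
    (1 - ∑ m, ((P m * msqrt ρ * P m) ^ 2).trace.re = 0 ↔ ρ = ∑ m, P m * ρ * P m) := by
  have hms : msqrt ρ = hρ.sqrt := dif_pos hρ
  set A := hρ.sqrt with hAdef
  have hAh : A.IsHermitian := hρ.posSemidef_sqrt.1
  have hAA : A * A = ρ := hρ.sqrt_mul_self
  set B : Matrix (Fin d) (Fin d) ℂ := ∑ m, P m * A * P m with hBdef
  -- Hermiticity of B
  have hBh : Bᴴ = B := by
    rw [hBdef, conjTranspose_sum]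
    refine Finset.sum_congr rfl fun m _ => ?_
    simp [conjTranspose_mul, (hPh m).eq, hAh.eq, mul_assoc]
  -- squared terms
  have hsq : ∀ m, (P m * A * P m) ^ 2 = P m * A * P m * A * P m := by
    intro m
    have : (P m * A * P m) ^ 2 = P m * A * (P m * P m) * A * P m := by
      rw [sq]; noncomm_ring
    rw [this, hPi]
  -- trace of squared term
  have htr : ∀ m, ((P m * A * P m) ^ 2).trace = (P m * A * P m * A).trace := by
    intro m
    rw [hsq m, Matrix.trace_mul_comm (P m * A * P m * A) (P m)]
    have : P m * (P m * A * P m * A) = P m * P m * A * P m * A := by noncomm_ring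
    rw [this, hPi]
  -- cross terms vanish
  have hcross : ∀ m m', m ≠ m' → (P m * A * P m) * (P m' * A * P m') = 0 := by
    intro m m' h
    have : (P m * A * P m) * (P m' * A * P m') = P m * A * (P m * P m') * (A * P m') := by
      noncomm_ring
    rw [this, hPo m m' h, mul_zero, zero_mul]
  have hBB : B * B = ∑ m, (P m * A * P m) ^ 2 := by
    rw [hBdef, Finset.sum_mul_sum]
    refine Finset.sum_congr rfl fun m _ => ?_
    rw [Finset.sum_eq_single m]
    · rw [sq]
    · intro m' _ hne; exact hcross m m' (fun h => hne h.symm)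
    · intro h; exact absurd (Finset.mem_univ m) h
  have hTAB : (A * B).trace = ∑ m, ((P m * A * P m) ^ 2).trace := by
    rw [hBdef, Finset.mul_sum, trace_sum]
    refine Finset.sum_congr rfl fun m _ => ?_
    rw [htr m, Matrix.trace_mul_comm A (P m * A * P m)]
  have hTBA : (B * A).trace = ∑ m, ((P m * A * P m) ^ 2).trace := by
    rw [hBdef, Finset.sum_mul, trace_sum]
    refine Finset.sum_congr rfl fun m _ => ?_
    rw [htr m]
  -- key identity
  have key : (((A - B)ᴴ) * (A - B)).trace
      = 1 - ∑ m, ((P m * A * P m) ^ 2).trace := by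
    rw [conjTranspose_sub, hAh.eq, hBh]
    rw [sub_mul, mul_sub, mul_sub, trace_sub, trace_sub, trace_sub, hAA, hρtr,
      hTAB, hTBA, hBB, trace_sum]
    ring
  have hmain : 1 - ∑ m, ((P m * msqrt ρ * P m) ^ 2).trace.re
      = ∑ i, ∑ j, Complex.normSq ((A - B) j i) := by
    have h2 : ((∑ i, ∑ j, Complex.normSq ((A - B) j i) : ℝ) : ℂ)
        = 1 - ∑ m, ((P m * A * P m) ^ 2).trace := by
      rw [← trace_ct]; exact key
    have := congrArg Complex.re h2
    simp only [Complex.ofReal_re, Complex.sub_re, Complex.one_re, Complex.re_sum] at this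
    rw [hms, ← this]
  constructor
  · rw [hmain]
    exact Finset.sum_nonneg fun i _ => Finset.sum_nonneg fun j _ => Complex.normSq_nonneg _
  constructor
  · -- zero ⟹ block diagonal
    intro h0
    rw [hmain] at h0
    have hD : A - B = 0 := by
      ext i j
      have hnn : ∀ i ∈ Finset.univ, (0:ℝ) ≤ ∑ j, Complex.normSq ((A - B) j i) :=
        fun i _ => Finset.sum_nonneg fun j _ => Complex.normSq_nonneg _
      have h1 := (Finset.sum_eq_zero_iff_of_nonneg hnn).mp h0 j (Finset.mem_univ _)
      have h2 := (Finset.sum_eq_zero_iff_of_nonneg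
        (fun k _ => Complex.normSq_nonneg ((A - B) k j))).mp h1 i (Finset.mem_univ _)
      simpa using Complex.normSq_eq_zero.mp h2
    have hABeq : A = B := by linear_combination (norm := noncomm_ring) hD
    have hρeq : ρ = ∑ m, P m * A * P m * A * P m := by
      rw [← hAA]
      calc A * A = B * B := by rw [hABeq]
      _ = ∑ m, (P m * A * P m) ^ 2 := hBB
      _ = ∑ m, P m * A * P m * A * P m := Finset.sum_congr rfl fun m _ => hsq m
    rw [hρeq]
    refine (Finset.sum_congr rfl fun k _ => ?_).symm
    rw [Finset.mul_sum, Finset.sum_mul]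
    rw [Finset.sum_eq_single k]
    · have : P k * (P k * A * P k * A * P k) * P k
          = (P k * P k) * A * P k * A * (P k * P k) := by noncomm_ring
      rw [this, hPi]
    · intro m _ hne
      have : P k * (P m * A * P m * A * P m) * P k
          = (P k * P m) * (A * P m * A * P m * P k) := by noncomm_ring
      rw [this, hPo k m (fun h => hne h.symm), zero_mul]
    · intro h; exact absurd (Finset.mem_univ k) h
  · -- block diagonal ⟹ zero
    intro hblock
    have hX : ∀ m, (P m * ρ * P m).PosSemidef := by
      intro m
      have := hρ.mul_mul_conjTranspose_same (P m)
      rwa [(hPh m).eq] at this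
    set S : Fin M → Matrix (Fin d) (Fin d) ℂ := fun m => (hX m).sqrt with hSdef
    have hSps : ∀ m, (S m).PosSemidef := fun m => (hX m).posSemidef_sqrt
    have hSsq : ∀ m, S m * S m = P m * ρ * P m := fun m => (hX m).sqrt_mul_self
    have hPS : ∀ m, P m * S m = S m := by
      intro m
      have h0 : (1 - P m) * S m = 0 := by
        apply eq_zero_of_trace_ct
        have hct : ((1 - P m) * S m)ᴴ = S m * (1 - P m) := by
          rw [conjTranspose_mul, conjTranspose_sub, conjTranspose_one, (hPh m).eq,
            (hSps m).1.eq]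
        rw [hct]
        have : S m * (1 - P m) * ((1 - P m) * S m)
            = S m * ((1 - P m) * (1 - P m)) * S m := by noncomm_ring
        rw [this]
        have h11 : (1 - P m) * (1 - P m) = 1 - P m := by
          have e : (1 - P m) * (1 - P m) = 1 - P m - (P m - P m * P m) := by
            noncomm_ring
          rw [e, hPi, sub_self, sub_zero]
        rw [h11]
        have : S m * (1 - P m) * S m = S m * ((1 - P m) * S m) := by noncomm_ring
        rw [this, Matrix.trace_mul_comm, mul_assoc, hSsq m]
        have : (1 - P m) * (P m * ρ * P m) = (P m - P m * P m) * (ρ * P m) := by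
          noncomm_ring
        rw [this, hPi, sub_self, zero_mul, trace_zero]
      have h1 : S m - P m * S m = 0 := by rw [← h0]; noncomm_ring
      exact (sub_eq_zero.mp h1).symm
    have hSP : ∀ m, S m * P m = S m := by
      intro m
      have := congrArg conjTranspose (hPS m)
      rwa [conjTranspose_mul, (hPh m).eq, (hSps m).1.eq] at this
    set Q : Matrix (Fin d) (Fin d) ℂ := ∑ m, S m with hQdef
    have hQps : Q.PosSemidef := by
      rw [hQdef]
      exact Finset.sum_induction _ _ (fun a b ha hb => ha.add hb)
        Matrix.PosSemidef.zero (fun m _ => hSps m)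
    have hQQ : Q * Q = ρ := by
      rw [hQdef, Finset.sum_mul_sum]
      have : ∀ m, ∑ m', S m * S m' = P m * ρ * P m := by
        intro m
        rw [Finset.sum_eq_single m]
        · exact hSsq m
        · intro m' _ hne
          rw [← hSP m, ← hPS m']
          have e : S m * P m * (P m' * S m') = S m * (P m * P m') * S m' := by
            noncomm_ring
          rw [e, hPo m m' (fun h => hne h.symm), mul_zero, zero_mul]
        · intro h; exact absurd (Finset.mem_univ m) h
      rw [Finset.sum_congr rfl fun m _ => this m, ← hblock]
    have hQA : Q = A := hQps.eq_sqrt_of_sq_eq hρ (by rw [sq]; exact hQQ)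
    have hPQP : ∀ m, P m * Q * P m = S m := by
      intro m
      rw [hQdef, Finset.mul_sum, Finset.sum_mul, Finset.sum_eq_single m]
      · rw [hPS m, hSP m]
      · intro k _ hne
        rw [← hPS k, ← mul_assoc (P m), hPo m k (fun h => hne h.symm), zero_mul,
          zero_mul]
      · intro h; exact absurd (Finset.mem_univ m) h
    have hABeq : A = B := by
      calc A = Q := hQA.symm
      _ = ∑ m, S m := hQdef
      _ = ∑ m, P m * Q * P m := (Finset.sum_congr rfl fun m _ => (hPQP m).symm)
      _ = ∑ m, P m * A * P m := by rw [hQA]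
      _ = B := hBdef.symm
    rw [hmain, hABeq, sub_self]
    simp
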